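/- Let n_1,…,n_c > 0, α > 0, λ > 0, and let u(t) ∈ ℝ^c evolve by the ODE du^{(o)}/dt = λ n_o u^{(o)}(t). Define p_o(t) = n_o e^{α u^{(o)}(t)} / Σ_k n_k e^{α u^{(k)}(t)} and the entropy H(t) = −Σ_o p_o(t) ln p_o(t). Then dH/dt = −λα·Cov(X,Y), where X takes value n_o u^{(o)}(t) and Y takes value ln p_o(t), each with probability p_o(t). -/

import Mathlib

/-- Entropy decay formula: along the flow du⁽ᵒ⁾/dt = λ nₒ u⁽ᵒ⁾, the entropy of the
weighted softmax distribution pₒ satisfies dH/dt = −λα·Cov(X,Y), where X takes value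
nₒ u⁽ᵒ⁾(t) and Y takes value ln pₒ(t), each with probability pₒ(t). -/
theorem entropy_deriv_eq_neg_cov (c : ℕ) (nv : Fin c → ℝ) (α lam : ℝ)
    (hnv : ∀ o, 0 < nv o) (hα : 0 < α) (hlam : 0 < lam)
    (u : ℝ → Fin c → ℝ) (t : ℝ)
    (hu : ∀ o s, HasDerivAt (fun r => u r o) (lam * nv o * u s o) s)
    (p : Fin c → ℝ → ℝ)
    (hp : ∀ o s, p o s =
      nv o * Real.exp (α * u s o) / ∑ k, nv k * Real.exp (α * u s k)) :
    HasDerivAt (fun s => -∑ o, p o s * Real.log (p o s))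
      (-(lam * α) *
        ((∑ o, (nv o * u t o) * Real.log (p o t) * p o t) -
          (∑ o, (nv o * u t o) * p o t) * (∑ o, Real.log (p o t) * p o t))) t := by
  rcases isEmpty_or_nonempty (Fin c) with hE | hNE
  · simp only [Finset.univ_eq_empty, Finset.sum_empty, neg_zero, mul_zero, zero_mul,
      sub_zero, mul_zero]
    exact hasDerivAt_const t 0
  -- notation
  set f : Fin c → ℝ → ℝ := fun o s => nv o * Real.exp (α * u s o) with hf_def
  set Z : ℝ → ℝ := fun s => ∑ k, f k s with hZ_def
  have hZpos : ∀ s, 0 < Z s := fun s =>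
    Finset.sum_pos (fun k _ => mul_pos (hnv k) (Real.exp_pos _)) Finset.univ_nonempty
  have hZne : ∀ s, Z s ≠ 0 := fun s => ne_of_gt (hZpos s)
  have hppos : ∀ o s, 0 < p o s := by
    intro o s
    rw [hp o s]
    exact div_pos (mul_pos (hnv o) (Real.exp_pos _)) (hZpos s)
  -- derivative of f
  have hf : ∀ o s, HasDerivAt (fun r => f o r)
      (α * (lam * nv o * u s o) * f o s) s := by
    intro o s
    have h1 : HasDerivAt (fun r => α * u r o) (α * (lam * nv o * u s o)) s :=
      (hu o s).const_mul α
    have h2 := h1.exp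
    have h3 := h2.const_mul (nv o)
    convert! h3 using 1
    simp [hf_def]; ring
  -- derivative of Z
  have hZ : HasDerivAt Z (∑ k, α * (lam * nv k * u t k) * f k t) t := by
    apply HasDerivAt.fun_sum
    intro k _
    exact hf k t
  set SXF : ℝ := ∑ k, (nv k * u t k) * f k t with hSXF_def
  have hZ' : HasDerivAt Z ((α * lam) * SXF) t := by
    convert hZ using 1
    rw [hSXF_def, Finset.mul_sum]
    exact Finset.sum_congr rfl fun k _ => by ring
  set E : ℝ := ∑ k, (nv k * u t k) * p k t with hE_def
  have hEeq : E = SXF / Z t := by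
    rw [hE_def, hSXF_def, Finset.sum_div]
    exact Finset.sum_congr rfl fun k _ => by rw [hp k t]; ring
  -- derivative of p o
  have hpd : ∀ o, HasDerivAt (fun s => p o s)
      (lam * α * (p o t * (nv o * u t o) - p o t * E)) t := by
    intro o
    have hpe : (fun s => p o s) = fun s => f o s / Z s := funext fun s => hp o s
    rw [hpe]
    have h := (hf o t).fun_div hZ' (hZne t)
    convert! h using 1
    rw [hp o t, hEeq]
    have hne : (∑ k, nv k * Real.exp (α * u t k)) ≠ 0 := hZne t
    simp only [hZ_def, hf_def, hSXF_def]
    field_simp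
  -- derivative of p log p
  have hpl : ∀ o, HasDerivAt (fun s => p o s * Real.log (p o s))
      ((lam * α * (p o t * (nv o * u t o) - p o t * E)) * Real.log (p o t) +
        (lam * α * (p o t * (nv o * u t o) - p o t * E))) t := by
    intro o
    have hlog := (hpd o).log (ne_of_gt (hppos o t))
    have h := (hpd o).fun_mul hlog
    convert! h using 1
    have hne := (hppos o t).ne'
    field_simp
  have hsum := HasDerivAt.fun_sum (fun o (_ : o ∈ Finset.univ) => hpl o)
  have hmain := hsum.fun_neg
  convert! hmain using 1
  -- now the algebraic identity
  have hone : ∑ o, p o t = 1 := by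
    have : ∀ o, p o t = f o t / Z t := fun o => hp o t
    simp only [this]
    rw [← Finset.sum_div]
    exact div_self (hZne t)
  have hsplit : ∑ o, ((lam * α * (p o t * (nv o * u t o) - p o t * E)) * Real.log (p o t) +
      (lam * α * (p o t * (nv o * u t o) - p o t * E)))
      = lam * α * ((∑ o, (nv o * u t o) * Real.log (p o t) * p o t)
          - E * (∑ o, Real.log (p o t) * p o t))
        + lam * α * ((∑ o, (nv o * u t o) * p o t) - E * (∑ o, p o t)) := by
    rw [Finset.sum_add_distrib]
    congr 1
    · rw [mul_sub, Finset.mul_sum, Finset.mul_sum, Finset.mul_sum, ← Finset.sum_sub_distrib]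
      exact Finset.sum_congr rfl fun o _ => by ring
    · rw [mul_sub, Finset.mul_sum, Finset.mul_sum, Finset.mul_sum, ← Finset.sum_sub_distrib]
      exact Finset.sum_congr rfl fun o _ => by ring
  rw [hsplit, hone, hE_def]
  ring
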